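/- Any configuration (x, y, θ) can be reached from any other configuration (x₀, y₀, θ₀) in the obstacle-free plane: the kinematic system with controls v, ω ∈ [−1,1] is completely controllable. -/

import Mathlib

open Real

/-- The controls v, ω are admissible: measurable and valued in [−1,1]. -/
def AdmissibleControl (v ω : ℝ → ℝ) : Prop :=
  Measurable v ∧ Measurable ω ∧ ∀ s, v s ∈ Set.Icc (-1 : ℝ) 1 ∧ ω s ∈ Set.Icc (-1 : ℝ) 1

/-- (x,y,θ) solves the kinematic equations with controls (v,ω). -/
def KinematicTraj (W d : ℝ) (v ω x y θ : ℝ → ℝ) : Prop :=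
  (∀ s, HasDerivAt x (v s * Real.cos (θ s) - ω s * W * d * Real.sin (θ s)) s) ∧
  (∀ s, HasDerivAt y (v s * Real.sin (θ s) + ω s * W * d * Real.cos (θ s)) s) ∧
  (∀ s, HasDerivAt θ (ω s * W) s)

/-- The optimal travel time function (valued in [0,∞]): the infimum over admissible
controls of the first arrival time minus t for trajectories starting at (x₀,y₀,θ₀)
at time t and reaching the target (xf,yf,θf) by the horizon time T; +∞ if the target
cannot be reached. -/
noncomputable def travelTime (W d T xf yf θf : ℝ) (x₀ y₀ θ₀ t : ℝ) : ENNReal :=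
  sInf {c : ENNReal | ∃ δ : ℝ, 0 ≤ δ ∧ t + δ ≤ T ∧ c = ENNReal.ofReal δ ∧
    ∃ v ω x y θ : ℝ → ℝ, AdmissibleControl v ω ∧ KinematicTraj W d v ω x y θ ∧
      x t = x₀ ∧ y t = y₀ ∧ θ t = θ₀ ∧
      x (t + δ) = xf ∧ y (t + δ) = yf ∧ θ (t + δ) = θf}

private noncomputable def Fb (L s : ℝ) : ℝ := (s - Real.sin (2*Real.pi/L*s) * (L/(2*Real.pi)))/2
private noncomputable def Gb (L s : ℝ) : ℝ := (1 - Real.cos (2*Real.pi/L*s))/2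

private lemma Fb_hasDerivAt {L : ℝ} (hL : L ≠ 0) (s : ℝ) :
    HasDerivAt (Fb L) (Gb L s) s := by
  have hπ := Real.pi_ne_zero
  have h1 : HasDerivAt (fun t : ℝ => 2*Real.pi/L*t) (2*Real.pi/L) s := by
    simpa using (hasDerivAt_id s).const_mul (2*Real.pi/L)
  have h2 : HasDerivAt (fun t : ℝ => Real.sin (2*Real.pi/L*t) * (L/(2*Real.pi)))
      (Real.cos (2*Real.pi/L*s) * (2*Real.pi/L) * (L/(2*Real.pi))) s :=
    ((Real.hasDerivAt_sin _).comp s h1).mul_const _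
  have h3 := ((hasDerivAt_id s).sub h2).div_const 2
  have e1 : 2*Real.pi/L * (L/(2*Real.pi)) = 1 := by field_simp
  have e : Gb L s = (1 - Real.cos (2*Real.pi/L*s) * (2*Real.pi/L) * (L/(2*Real.pi)))/2 := by
    unfold Gb; rw [mul_assoc, e1, mul_one]
  rw [e]; exact h3

private lemma Fb_zero (L : ℝ) : Fb L 0 = 0 := by simp [Fb]

private lemma Fb_self {L : ℝ} (hL : L ≠ 0) : Fb L L = L/2 := by
  unfold Fb
  have h : 2*Real.pi/L*L = 2*Real.pi := by field_simp
  rw [h, Real.sin_two_pi]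
  ring

private lemma Gb_zero (L : ℝ) : Gb L 0 = 0 := by simp [Gb]

private lemma Gb_self {L : ℝ} (hL : L ≠ 0) : Gb L L = 0 := by
  unfold Gb
  have h : 2*Real.pi/L*L = 2*Real.pi := by field_simp
  rw [h, Real.cos_two_pi]
  ring

private lemma Gb_mem (L s : ℝ) : Gb L s ∈ Set.Icc (0:ℝ) 1 := by
  have h1 := Real.neg_one_le_cos (2*Real.pi/L*s)
  have h2 := Real.cos_le_one (2*Real.pi/L*s)
  unfold Gb
  constructor <;> [linarith; linarith]

private lemma piecewise_hasDerivAt {f g f' g' : ℝ → ℝ} {L : ℝ}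
    (hf : ∀ s, HasDerivAt f (f' s) s) (hg : ∀ s, HasDerivAt g (g' s) s)
    (hv : f L = g L) (hder : f' L = g' L) (s : ℝ) :
    HasDerivAt (fun t => if t ≤ L then f t else g t)
      (if s ≤ L then f' s else g' s) s := by
  rcases lt_trichotomy s L with h | heq | h
  · rw [if_pos h.le]
    have he : f =ᶠ[nhds s] fun t => if t ≤ L then f t else g t := by
      filter_upwards [Iio_mem_nhds h] with t ht
      simp [(Set.mem_Iio.mp ht).le]
    exact he.hasDerivAt_iff.mp (hf s)
  · subst heq
    rw [if_pos le_rfl]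
    have h1 : HasDerivWithinAt (fun t => if t ≤ s then f t else g t) (f' s) (Set.Iic s) s := by
      refine (hf s).hasDerivWithinAt.congr (fun t ht => ?_) (by simp)
      simp [Set.mem_Iic.mp ht]
    have h2 : HasDerivWithinAt (fun t => if t ≤ s then f t else g t) (f' s) (Set.Ici s) s := by
      rw [hder]
      refine (hg s).hasDerivWithinAt.congr (fun t ht => ?_) (by simp [hv])
      by_cases h' : t ≤ s
      · have hts : t = s := le_antisymm h' ht
        simp [hts, hv]
      · simp [h']
    have h3 := h1.union h2
    rw [Set.Iic_union_Ici] at h3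
    exact hasDerivWithinAt_univ.mp h3
  · rw [if_neg (not_le.mpr h)]
    have he : g =ᶠ[nhds s] fun t => if t ≤ L then f t else g t := by
      filter_upwards [Ioi_mem_nhds h] with t ht
      simp [not_le.mpr (Set.mem_Ioi.mp ht)]
    exact he.hasDerivAt_iff.mp (hg s)


set_option maxHeartbeats 2000000 in
/-- complete controllability — any configuration (x₁,y₁,θ₁) (with angle
understood mod 2π) can be reached from any configuration (x₀,y₀,θ₀) in finite time. -/
theorem complete_controllability (W d : ℝ) (hW : 0 < W) (hd : 0 < d)
    (x₀ y₀ θ₀ x₁ y₁ θ₁ : ℝ) :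
    ∃ T : ℝ, 0 < T ∧ ∃ v ω x y θ : ℝ → ℝ,
      AdmissibleControl v ω ∧ KinematicTraj W d v ω x y θ ∧
      x 0 = x₀ ∧ y 0 = y₀ ∧ θ 0 = θ₀ ∧
      x T = x₁ ∧ y T = y₁ ∧ ∃ m : ℤ, θ T = θ₁ + 2 * Real.pi * m := by
  have hWne : W ≠ 0 := ne_of_gt hW
  set p₀ : ℝ := x₀ - d * Real.cos θ₀ with hp₀
  set q₀ : ℝ := y₀ - d * Real.sin θ₀ with hq₀
  set Δp : ℝ := x₁ - d * Real.cos θ₁ - p₀ with hΔp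
  set Δq : ℝ := y₁ - d * Real.sin θ₁ - q₀ with hΔq
  set z : ℂ := ⟨Δp, Δq⟩ with hz
  set R : ℝ := ‖z‖ with hRdef
  set φ : ℝ := Complex.arg z with hφ
  have hRcos : R * Real.cos φ = Δp := Complex.norm_mul_cos_arg z
  have hRsin : R * Real.sin φ = Δq := Complex.norm_mul_sin_arg z
  have hR0 : 0 ≤ R := norm_nonneg z
  set L : ℝ := 1 + 2*(|φ - θ₀| + |θ₁ - φ|)/W + 2*R with hLdef
  have hL : 0 < L := by
    have h1 : 0 ≤ 2*(|φ - θ₀| + |θ₁ - φ|)/W := by positivity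
    rw [hLdef]; linarith
  have hLne : L ≠ 0 := ne_of_gt hL
  have hLW : 0 < L * W := mul_pos hL hW
  have hLWeq' : L * W = W + 2*|φ - θ₀| + 2*|θ₁ - φ| + 2*R*W := by
    rw [hLdef]; field_simp; ring
  set a : ℝ := 2*(φ - θ₀)/(L*W) with ha
  set b : ℝ := 2*(θ₁ - φ)/(L*W) with hb
  set c : ℝ := 2*R/L with hc
  have haabs : |a| ≤ 1 := by
    rw [ha, abs_div, abs_of_pos hLW, div_le_one hLW, abs_mul, abs_two]
    nlinarith [abs_nonneg (θ₁ - φ), mul_nonneg hR0 hW.le]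
  have hbabs : |b| ≤ 1 := by
    rw [hb, abs_div, abs_of_pos hLW, div_le_one hLW, abs_mul, abs_two]
    nlinarith [abs_nonneg (φ - θ₀), mul_nonneg hR0 hW.le]
  have hcabs : |c| ≤ 1 := by
    rw [hc, abs_div, abs_of_pos hL, div_le_one hL, abs_of_nonneg (by positivity : (0:ℝ) ≤ 2*R)]
    have h1 : 0 ≤ 2*(|φ - θ₀| + |θ₁ - φ|)/W := by positivity
    rw [hLdef]; linarith
  have hFL : Fb L L = L/2 := Fb_self hLne
  have hF0 : Fb L 0 = 0 := Fb_zero L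
  have hGL : Gb L L = 0 := Gb_self hLne
  have hG0 : Gb L 0 = 0 := Gb_zero L
  have hL2 : L ≤ 2*L := by linarith
  have hmid1 : θ₀ + a*W*Fb L L = φ := by
    rw [hFL, ha]; field_simp; ring
  have hmid2 : φ + b*W*Fb L L = θ₁ := by
    rw [hFL, hb]; field_simp; ring
  have hcF : c * Fb L L = R := by
    rw [hFL, hc]; field_simp
  have hF := Fb_hasDerivAt hLne
  have hsh : ∀ (e t : ℝ), HasDerivAt (fun u => Fb L (u - e)) (Gb L (t - e)) t := by
    intro e t
    have := (hF (t - e)).comp t ((hasDerivAt_id t).sub_const e); rw [mul_one] at this; exact this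
  have dA : ∀ t, HasDerivAt (fun u => θ₀ + a*W*Fb L u) (a*W*Gb L t) t := fun t => by
    simpa using ((hF t).const_mul (a*W)).const_add θ₀
  have dC : ∀ t, HasDerivAt (fun u => φ + b*W*Fb L (u - 2*L)) (b*W*Gb L (t - 2*L)) t := fun t => by
    simpa using ((hsh (2*L) t).const_mul (b*W)).const_add φ
  have dXA : ∀ t, HasDerivAt (fun u => p₀ + d * Real.cos (θ₀ + a*W*Fb L u))
      (d * (-Real.sin (θ₀ + a*W*Fb L t) * (a*W*Gb L t))) t := fun t =>
    (((Real.hasDerivAt_cos _).comp t (dA t)).const_mul d).const_add p₀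
  have dXB : ∀ t, HasDerivAt (fun u => p₀ + c * Fb L (u - L) * Real.cos φ + d * Real.cos φ)
      (c * Gb L (t - L) * Real.cos φ) t := fun t =>
    ((((hsh L t).const_mul c).mul_const (Real.cos φ)).const_add p₀).add_const (d * Real.cos φ)
  have dXC : ∀ t, HasDerivAt (fun u => p₀ + Δp + d * Real.cos (φ + b*W*Fb L (u - 2*L)))
      (d * (-Real.sin (φ + b*W*Fb L (t - 2*L)) * (b*W*Gb L (t - 2*L)))) t := fun t =>
    (((Real.hasDerivAt_cos _).comp t (dC t)).const_mul d).const_add (p₀ + Δp)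
  have dYA : ∀ t, HasDerivAt (fun u => q₀ + d * Real.sin (θ₀ + a*W*Fb L u))
      (d * (Real.cos (θ₀ + a*W*Fb L t) * (a*W*Gb L t))) t := fun t =>
    (((Real.hasDerivAt_sin _).comp t (dA t)).const_mul d).const_add q₀
  have dYB : ∀ t, HasDerivAt (fun u => q₀ + c * Fb L (u - L) * Real.sin φ + d * Real.sin φ)
      (c * Gb L (t - L) * Real.sin φ) t := fun t =>
    ((((hsh L t).const_mul c).mul_const (Real.sin φ)).const_add q₀).add_const (d * Real.sin φ)
  have dYC : ∀ t, HasDerivAt (fun u => q₀ + Δq + d * Real.sin (φ + b*W*Fb L (u - 2*L)))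
      (d * (Real.cos (φ + b*W*Fb L (t - 2*L)) * (b*W*Gb L (t - 2*L)))) t := fun t =>
    (((Real.hasDerivAt_sin _).comp t (dC t)).const_mul d).const_add (q₀ + Δq)
  set Θ : ℝ → ℝ := fun t => if t ≤ L then θ₀ + a*W*Fb L t else if t ≤ 2*L then φ
      else φ + b*W*Fb L (t - 2*L) with hΘ
  set X : ℝ → ℝ := fun t => if t ≤ L then p₀ + d * Real.cos (θ₀ + a*W*Fb L t)
      else if t ≤ 2*L then p₀ + c * Fb L (t - L) * Real.cos φ + d * Real.cos φ
      else p₀ + Δp + d * Real.cos (φ + b*W*Fb L (t - 2*L)) with hX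
  set Y : ℝ → ℝ := fun t => if t ≤ L then q₀ + d * Real.sin (θ₀ + a*W*Fb L t)
      else if t ≤ 2*L then q₀ + c * Fb L (t - L) * Real.sin φ + d * Real.sin φ
      else q₀ + Δq + d * Real.sin (φ + b*W*Fb L (t - 2*L)) with hY
  set vc : ℝ → ℝ := fun t => if t ≤ L then 0 else if t ≤ 2*L then c * Gb L (t - L) else 0 with hvc
  set ωc : ℝ → ℝ := fun t => if t ≤ L then a * Gb L t else if t ≤ 2*L then 0
      else b * Gb L (t - 2*L) with hωc
  have HΘ : ∀ s, HasDerivAt Θ (if s ≤ L then a*W*Gb L s else if s ≤ 2*L then 0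
      else b*W*Gb L (s - 2*L)) s := by
    intro s
    rw [hΘ]
    refine piecewise_hasDerivAt (f := fun u => θ₀ + a*W*Fb L u) (f' := fun t => a*W*Gb L t)
      (g := fun u => if u ≤ 2*L then φ else φ + b*W*Fb L (u - 2*L))
      (g' := fun t => if t ≤ 2*L then 0 else b*W*Gb L (t - 2*L)) dA ?_ ?_ ?_ s
    · intro t
      exact piecewise_hasDerivAt (fun _ => hasDerivAt_const _ _) dC
        (by simp [hF0]) (by simp [hG0]) t
    · simp only [if_pos hL2]; exact hmid1
    · simp only [if_pos hL2, hGL]; ring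
  have HX : ∀ s, HasDerivAt X (if s ≤ L then d * (-Real.sin (θ₀ + a*W*Fb L s) * (a*W*Gb L s))
      else if s ≤ 2*L then c * Gb L (s - L) * Real.cos φ
      else d * (-Real.sin (φ + b*W*Fb L (s - 2*L)) * (b*W*Gb L (s - 2*L)))) s := by
    intro s
    rw [hX]
    refine piecewise_hasDerivAt (f := fun u => p₀ + d * Real.cos (θ₀ + a*W*Fb L u))
      (f' := fun t => d * (-Real.sin (θ₀ + a*W*Fb L t) * (a*W*Gb L t)))
      (g := fun u => if u ≤ 2*L then p₀ + c * Fb L (u - L) * Real.cos φ + d * Real.cos φ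
        else p₀ + Δp + d * Real.cos (φ + b*W*Fb L (u - 2*L)))
      (g' := fun t => if t ≤ 2*L then c * Gb L (t - L) * Real.cos φ
        else d * (-Real.sin (φ + b*W*Fb L (t - 2*L)) * (b*W*Gb L (t - 2*L)))) dXA ?_ ?_ ?_ s
    · intro t
      refine piecewise_hasDerivAt dXB dXC ?_ ?_ t
      · have e1 : 2*L - L = L := by ring
        have e2 : 2*L - 2*L = 0 := by ring
        simp only [e1, e2, hF0, hcF, hRcos, mul_zero, add_zero]
      · have e1 : 2*L - L = L := by ring
        have e2 : 2*L - 2*L = 0 := by ring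
        simp only [e1, e2, hGL, hG0]; ring
    · simp only [if_pos hL2, hmid1, sub_self, hF0, mul_zero, zero_mul, add_zero]
    · simp only [if_pos hL2, hGL, sub_self, hG0]; ring
  have HY : ∀ s, HasDerivAt Y (if s ≤ L then d * (Real.cos (θ₀ + a*W*Fb L s) * (a*W*Gb L s))
      else if s ≤ 2*L then c * Gb L (s - L) * Real.sin φ
      else d * (Real.cos (φ + b*W*Fb L (s - 2*L)) * (b*W*Gb L (s - 2*L)))) s := by
    intro s
    rw [hY]
    refine piecewise_hasDerivAt (f := fun u => q₀ + d * Real.sin (θ₀ + a*W*Fb L u))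
      (f' := fun t => d * (Real.cos (θ₀ + a*W*Fb L t) * (a*W*Gb L t)))
      (g := fun u => if u ≤ 2*L then q₀ + c * Fb L (u - L) * Real.sin φ + d * Real.sin φ
        else q₀ + Δq + d * Real.sin (φ + b*W*Fb L (u - 2*L)))
      (g' := fun t => if t ≤ 2*L then c * Gb L (t - L) * Real.sin φ
        else d * (Real.cos (φ + b*W*Fb L (t - 2*L)) * (b*W*Gb L (t - 2*L)))) dYA ?_ ?_ ?_ s
    · intro t
      refine piecewise_hasDerivAt dYB dYC ?_ ?_ t
      · have e1 : 2*L - L = L := by ring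
        have e2 : 2*L - 2*L = 0 := by ring
        simp only [e1, e2, hF0, hcF, hRsin, mul_zero, add_zero]
      · have e1 : 2*L - L = L := by ring
        have e2 : 2*L - 2*L = 0 := by ring
        simp only [e1, e2, hGL, hG0]; ring
    · simp only [if_pos hL2, hmid1, sub_self, hF0, mul_zero, zero_mul, add_zero]
    · simp only [if_pos hL2, hGL, sub_self, hG0]; ring
  have hGmem : ∀ u, Gb L u ∈ Set.Icc (0:ℝ) 1 := Gb_mem L
  have hmul : ∀ (k u : ℝ), |k| ≤ 1 → k * Gb L u ∈ Set.Icc (-1:ℝ) 1 := by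
    intro k u hk
    obtain ⟨hg0, hg1⟩ := hGmem u
    obtain ⟨hk1, hk2⟩ := abs_le.mp hk
    constructor <;> nlinarith
  have hGbC : ∀ e : ℝ, Measurable (fun s : ℝ => Gb L (s - e)) := by
    intro e
    apply Continuous.measurable
    unfold Gb
    fun_prop
  have hGbC0 : Measurable (Gb L) := by
    apply Continuous.measurable
    unfold Gb
    fun_prop
  have hmeasset : ∀ r : ℝ, MeasurableSet {s : ℝ | s ≤ r} := fun r =>
    measurableSet_le measurable_id measurable_const
  refine ⟨3*L, by linarith, vc, ωc, X, Y, Θ, ⟨?_, ?_, ?_⟩, ⟨?_, ?_, ?_⟩, ?_, ?_, ?_, ?_, ?_, 0, ?_⟩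
  · -- Measurable vc
    rw [hvc]
    exact Measurable.ite (hmeasset L) measurable_const
      (Measurable.ite (hmeasset (2*L)) ((hGbC L).const_mul c) measurable_const)
  · -- Measurable ωc
    rw [hωc]
    exact Measurable.ite (hmeasset L) (hGbC0.const_mul a)
      (Measurable.ite (hmeasset (2*L)) measurable_const ((hGbC (2*L)).const_mul b))
  · -- bounds
    intro s
    constructor
    · rw [hvc]
      simp only
      split_ifs
      · norm_num
      · exact hmul c (s - L) hcabs
      · norm_num
    · rw [hωc]
      simp only
      split_ifs
      · exact hmul a s haabs
      · norm_num
      · exact hmul b (s - 2*L) hbabs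
  · -- x equation
    intro s
    have h := HX s
    have heq : (if s ≤ L then d * (-Real.sin (θ₀ + a*W*Fb L s) * (a*W*Gb L s))
        else if s ≤ 2*L then c * Gb L (s - L) * Real.cos φ
        else d * (-Real.sin (φ + b*W*Fb L (s - 2*L)) * (b*W*Gb L (s - 2*L))))
        = vc s * Real.cos (Θ s) - ωc s * W * d * Real.sin (Θ s) := by
      rw [hvc, hωc, hΘ]
      simp only
      by_cases h1 : s ≤ L
      · simp only [if_pos h1]; ring
      · by_cases h2 : s ≤ 2*L
        · simp only [if_neg h1, if_pos h2]; ring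
        · simp only [if_neg h1, if_neg h2]; ring
    rw [heq] at h
    exact h
  · -- y equation
    intro s
    have h := HY s
    have heq : (if s ≤ L then d * (Real.cos (θ₀ + a*W*Fb L s) * (a*W*Gb L s))
        else if s ≤ 2*L then c * Gb L (s - L) * Real.sin φ
        else d * (Real.cos (φ + b*W*Fb L (s - 2*L)) * (b*W*Gb L (s - 2*L))))
        = vc s * Real.sin (Θ s) + ωc s * W * d * Real.cos (Θ s) := by
      rw [hvc, hωc, hΘ]
      simp only
      by_cases h1 : s ≤ L
      · simp only [if_pos h1]; ring
      · by_cases h2 : s ≤ 2*L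
        · simp only [if_neg h1, if_pos h2]; ring
        · simp only [if_neg h1, if_neg h2]; ring
    rw [heq] at h
    exact h
  · -- θ equation
    intro s
    have h := HΘ s
    have heq : (if s ≤ L then a*W*Gb L s else if s ≤ 2*L then 0 else b*W*Gb L (s - 2*L))
        = ωc s * W := by
      rw [hωc]
      simp only
      by_cases h1 : s ≤ L
      · simp only [if_pos h1]; ring
      · by_cases h2 : s ≤ 2*L
        · simp only [if_neg h1, if_pos h2]; ring
        · simp only [if_neg h1, if_neg h2]; ring
    rw [heq] at h
    exact h
  · -- X 0 = x₀
    rw [hX]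
    simp only [if_pos hL.le, hF0, mul_zero, add_zero, hp₀]
    ring
  · -- Y 0 = y₀
    rw [hY]
    simp only [if_pos hL.le, hF0, mul_zero, add_zero, hq₀]
    ring
  · -- Θ 0 = θ₀
    rw [hΘ]
    simp only [if_pos hL.le, hF0, mul_zero, add_zero]
  · -- X (3L) = x₁
    have h1 : ¬ (3*L ≤ L) := by linarith
    have h2 : ¬ (3*L ≤ 2*L) := by linarith
    have e : 3*L - 2*L = L := by ring
    rw [hX]
    simp only [if_neg h1, if_neg h2, e]
    rw [hmid2, hΔp, hp₀]
    ring
  · -- Y (3L) = y₁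
    have h1 : ¬ (3*L ≤ L) := by linarith
    have h2 : ¬ (3*L ≤ 2*L) := by linarith
    have e : 3*L - 2*L = L := by ring
    rw [hY]
    simp only [if_neg h1, if_neg h2, e]
    rw [hmid2, hΔq, hq₀]
    ring
  · -- Θ (3L) = θ₁ + 2π·0
    have h1 : ¬ (3*L ≤ L) := by linarith
    have h2 : ¬ (3*L ≤ 2*L) := by linarith
    have e : 3*L - 2*L = L := by ring
    rw [hΘ]
    simp only [if_neg h1, if_neg h2, e]
    rw [hmid2]
    push_cast
    ring
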